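/- Let G be a simple graph on vertex set {1,…,n} and let t = (t_1,…,t_n) be a tuple of positive integers. Define mpsd_t(G) as the least k ∈ ℕ for which there exist orthogonal projections P_1,…,P_n ∈ M_k with rank P_i = t_i for each i and, for all distinct i,j, P_iP_j ≠ 0 if and only if i and j are adjacent in G. Then mpsd_t(G) = min{rank A : A is a positive semidefinite complex block matrix [A_{ij}]_{i,j=1}^n with blocks A_{ij} of size t_i × t_j, such that for all i,j, A_{ij} ≠ 0 ⟺ (i = j or i,j adjacent in G), and rank(A_{ii}) = t_i for each i} = min{rank B : B is a positive semidefinite complex block matrix [B_{ij}]_{i,j=1}^n with blocks B_{ij} of size t_i × t_j, such that for all i,j, B_{ij} ≠ 0 ⟺ (i = j or i,j adjacent in G), and B_{ii} = I_{t_i} for each i}. -/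

import Mathlib

open Matrix
open scoped ComplexOrder

private lemma isUnit_of_rank_eq {m : Type*} [Fintype m] [DecidableEq m]
    (A : Matrix m m ℂ) (h : A.rank = Fintype.card m) : IsUnit A := by
  rw [← Matrix.mulVec_surjective_iff_isUnit]
  have htop : LinearMap.range A.mulVecLin = ⊤ := by
    apply Submodule.eq_top_of_finrank_eq
    rw [Module.finrank_pi]
    exact h
  intro v
  exact LinearMap.range_eq_top.mp htop v

private lemma gram_fact {N : Type*} [Fintype N] [DecidableEq N]
    {A : Matrix N N ℂ} (hA : A.PosSemidef) {ρ : ℕ} (hr : A.rank = ρ) :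
    ∃ M : Matrix (Fin ρ) N ℂ, Mᴴ * M = A := by
  subst hr
  have hH := hA.1
  have hcard : Fintype.card (Fin A.rank) = Fintype.card {i // hH.eigenvalues i ≠ 0} := by
    rw [Fintype.card_fin]; exact hH.rank_eq_card_non_zero_eigs
  let e : Fin A.rank ≃ {i // hH.eigenvalues i ≠ 0} := Fintype.equivOfCardEq hcard
  set U : Matrix N N ℂ := (hH.eigenvectorUnitary : Matrix N N ℂ) with hU
  set M : Matrix (Fin A.rank) N ℂ :=
    Matrix.of (fun r x => ((Real.sqrt (hH.eigenvalues (e r)) : ℝ) : ℂ) * star (U x (e r))) with hM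
  refine ⟨M, ?_⟩
  ext x y
  set g : N → ℂ := fun i => U x i * ((hH.eigenvalues i : ℝ) : ℂ) * star (U y i) with hg
  have hterm : ∀ r : Fin A.rank, Mᴴ x r * M r y = g (e r) := by
    intro r
    have hsq : ((Real.sqrt (hH.eigenvalues (e r)) : ℝ) : ℂ)
        * ((Real.sqrt (hH.eigenvalues (e r)) : ℝ) : ℂ) = ((hH.eigenvalues (e r) : ℝ) : ℂ) := by
      rw [← Complex.ofReal_mul, Real.mul_self_sqrt (hA.eigenvalues_nonneg _)]
    simp only [hM, hg, Matrix.conjTranspose_apply, Matrix.of_apply, star_mul', star_star,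
      Complex.star_def, Complex.conj_ofReal, Complex.conj_conj]
    linear_combination ((starRingEnd ℂ) (U y (e r)) * U x (e r)) * hsq
  have hsum : (Mᴴ * M) x y = ∑ i, g i := by
    rw [Matrix.mul_apply]
    calc ∑ r, Mᴴ x r * M r y = ∑ r, g (e r) := by simp only [hterm]
      _ = ∑ s : {i // hH.eigenvalues i ≠ 0}, g s :=
          Fintype.sum_equiv e _ _ (fun r => rfl)
      _ = ∑ i ∈ Finset.univ.filter (fun i => hH.eigenvalues i ≠ 0), g i :=
          (Finset.sum_subtype _ (by simp) g).symm
      _ = ∑ i, g i := by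
          apply Finset.sum_filter_of_ne
          intro i _ hgi hzero
          apply hgi
          simp [hg, hzero]
  rw [hsum]
  conv_rhs => rw [hH.spectral_theorem, Unitary.conjStarAlgAut_apply]
  rw [Matrix.mul_apply]
  apply Finset.sum_congr rfl
  intro i _
  simp [hg, hU, Matrix.mul_diagonal, Matrix.star_apply, mul_assoc]

private lemma proj_fact {k t : ℕ} {P : Matrix (Fin k) (Fin k) ℂ} (hP : Pᴴ = P)
    (hP2 : P * P = P) (hr : P.rank = t) :
    ∃ V : Matrix (Fin k) (Fin t) ℂ, Vᴴ * V = 1 ∧ V * Vᴴ = P := by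
  have hpsd : P.PosSemidef := by
    have := Matrix.posSemidef_conjTranspose_mul_self P
    rwa [hP, hP2] at this
  obtain ⟨M, hM⟩ := gram_fact hpsd hr
  refine ⟨Mᴴ, ?_, by rwa [conjTranspose_conjTranspose]⟩
  rw [conjTranspose_conjTranspose]
  have hMrank : M.rank = t := by
    have h1 : (Mᴴ * M).rank = M.rank := Matrix.rank_conjTranspose_mul_self M
    rw [hM, hr] at h1; exact h1.symm
  have hrankW : (M * Mᴴ).rank = Fintype.card (Fin t) := by
    rw [Matrix.rank_self_mul_conjTranspose, Fintype.card_fin, hMrank]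
  have hu : IsUnit (M * Mᴴ) := isUnit_of_rank_eq _ hrankW
  have key : (M * Mᴴ) * (M * Mᴴ) * (M * Mᴴ) = (M * Mᴴ) * (M * Mᴴ) := by
    calc (M * Mᴴ) * (M * Mᴴ) * (M * Mᴴ) = M * ((Mᴴ * M) * (Mᴴ * M)) * Mᴴ := by
          simp only [Matrix.mul_assoc]
      _ = M * P * Mᴴ := by rw [hM, hP2]
      _ = (M * Mᴴ) * (M * Mᴴ) := by rw [← hM]; simp only [Matrix.mul_assoc]
  exact (hu.mul hu).mul_left_cancel (by rw [mul_one]; exact key)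

private lemma proj_of_full_rank {k s : ℕ} (B : Matrix (Fin k) (Fin s) ℂ)
    (hrk : (Bᴴ * B).rank = s) :
    (B * (Bᴴ*B)⁻¹ * Bᴴ)ᴴ = B * (Bᴴ*B)⁻¹ * Bᴴ ∧
    (B * (Bᴴ*B)⁻¹ * Bᴴ) * (B * (Bᴴ*B)⁻¹ * Bᴴ) = B * (Bᴴ*B)⁻¹ * Bᴴ ∧
    (B * (Bᴴ*B)⁻¹ * Bᴴ).rank = s ∧
    (B * (Bᴴ*B)⁻¹ * Bᴴ) * B = B ∧ Bᴴ * (B * (Bᴴ*B)⁻¹ * Bᴴ) = Bᴴ := by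
  have hu : IsUnit (Bᴴ * B) := isUnit_of_rank_eq _ (by rw [hrk, Fintype.card_fin])
  have hdet : IsUnit (Bᴴ * B).det := (Matrix.isUnit_iff_isUnit_det _).mp hu
  have key1 : (B * (Bᴴ*B)⁻¹ * Bᴴ) * B = B := by
    rw [Matrix.mul_assoc (B * (Bᴴ*B)⁻¹), Matrix.mul_assoc B, Matrix.nonsing_inv_mul _ hdet,
      Matrix.mul_one]
  have key2 : Bᴴ * (B * (Bᴴ*B)⁻¹ * Bᴴ) = Bᴴ := by
    rw [← Matrix.mul_assoc, ← Matrix.mul_assoc, Matrix.mul_nonsing_inv _ hdet, Matrix.one_mul]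
  have hGh : (Bᴴ*B)ᴴ = Bᴴ*B := by
    rw [Matrix.conjTranspose_mul, Matrix.conjTranspose_conjTranspose]
  have hherm : (B * (Bᴴ*B)⁻¹ * Bᴴ)ᴴ = B * (Bᴴ*B)⁻¹ * Bᴴ := by
    rw [Matrix.conjTranspose_mul, Matrix.conjTranspose_mul,
      Matrix.conjTranspose_nonsing_inv, hGh, Matrix.conjTranspose_conjTranspose,
      Matrix.mul_assoc]
  have hidem : (B * (Bᴴ*B)⁻¹ * Bᴴ) * (B * (Bᴴ*B)⁻¹ * Bᴴ) = B * (Bᴴ*B)⁻¹ * Bᴴ := by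
    rw [← Matrix.mul_assoc, ← Matrix.mul_assoc, key1]
  have hrankQ : (B * (Bᴴ*B)⁻¹ * Bᴴ).rank = s := by
    apply le_antisymm
    · calc (B * (Bᴴ*B)⁻¹ * Bᴴ).rank ≤ (B * (Bᴴ*B)⁻¹).rank := Matrix.rank_mul_le_left _ _
        _ ≤ B.rank := Matrix.rank_mul_le_left _ _
        _ ≤ s := by simpa using B.rank_le_card_width
    · calc s = (Bᴴ * B).rank := hrk.symm
        _ = (Bᴴ * ((B * (Bᴴ*B)⁻¹ * Bᴴ) * B)).rank := by rw [key1]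
        _ ≤ ((B * (Bᴴ*B)⁻¹ * Bᴴ) * B).rank := Matrix.rank_mul_le_right _ _
        _ ≤ (B * (Bᴴ*B)⁻¹ * Bᴴ).rank := Matrix.rank_mul_le_left _ _
  exact ⟨hherm, hidem, hrankQ, key1, key2⟩

private lemma dirB {n : ℕ} (G : SimpleGraph (Fin n)) (t : Fin n → ℕ)
    {ρ : ℕ} (A : Matrix ((i : Fin n) × Fin (t i)) ((i : Fin n) × Fin (t i)) ℂ)
    (hA : A.PosSemidef)
    (hpat : ∀ i j : Fin n, (Matrix.of fun (a : Fin (t i)) (b : Fin (t j)) =>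
        A ⟨i, a⟩ ⟨j, b⟩) ≠ 0 ↔ (i = j ∨ G.Adj i j))
    (hdiag : ∀ i : Fin n, (Matrix.of fun a b : Fin (t i) => A ⟨i, a⟩ ⟨i, b⟩).rank = t i)
    (hrank : A.rank = ρ) :
    ∃ P : Fin n → Matrix (Fin ρ) (Fin ρ) ℂ,
      (∀ i, (P i)ᴴ = P i) ∧ (∀ i, P i * P i = P i) ∧ (∀ i, (P i).rank = t i) ∧
      ∀ i j, i ≠ j → (P i * P j ≠ 0 ↔ G.Adj i j) := by
  obtain ⟨M, hM⟩ := gram_fact hA hrank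
  set Mb : (i : Fin n) → Matrix (Fin ρ) (Fin (t i)) ℂ :=
    fun i => Matrix.of (fun x a => M x ⟨i, a⟩) with hMb
  have hblock : ∀ i j, (Mb i)ᴴ * (Mb j)
      = Matrix.of fun (a : Fin (t i)) (b : Fin (t j)) => A ⟨i, a⟩ ⟨j, b⟩ := by
    intro i j
    ext a b
    rw [← hM]
    simp [hMb, Matrix.mul_apply, Matrix.conjTranspose_apply]
  have hrk : ∀ i, ((Mb i)ᴴ * Mb i).rank = t i := by
    intro i; rw [hblock i i]; exact hdiag i
  refine ⟨fun i => Mb i * ((Mb i)ᴴ * Mb i)⁻¹ * (Mb i)ᴴ, fun i => (proj_of_full_rank _ (hrk i)).1,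
    fun i => (proj_of_full_rank _ (hrk i)).2.1, fun i => (proj_of_full_rank _ (hrk i)).2.2.1, ?_⟩
  intro i j hij
  obtain ⟨-, -, -, hQB, hBQ⟩ := proj_of_full_rank _ (hrk i)
  obtain ⟨-, -, -, hQB', hBQ'⟩ := proj_of_full_rank _ (hrk j)
  set Qi := Mb i * ((Mb i)ᴴ * Mb i)⁻¹ * (Mb i)ᴴ with hQi
  set Qj := Mb j * ((Mb j)ᴴ * Mb j)⁻¹ * (Mb j)ᴴ with hQj
  have hkey : (Mb i)ᴴ * (Qi * Qj) * Mb j = (Mb i)ᴴ * Mb j := by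
    calc (Mb i)ᴴ * (Qi * Qj) * Mb j = ((Mb i)ᴴ * Qi) * (Qj * Mb j) := by
          simp only [Matrix.mul_assoc]
      _ = (Mb i)ᴴ * Mb j := by rw [hBQ, hQB']
  have hzero : Qi * Qj = 0 ↔ (Mb i)ᴴ * Mb j = 0 := by
    constructor
    · intro h
      rw [← hkey, h, Matrix.mul_zero, Matrix.zero_mul]
    · intro h
      have : Qi * Qj = ((Mb i * ((Mb i)ᴴ * Mb i)⁻¹) * ((Mb i)ᴴ * Mb j))
          * (((Mb j)ᴴ * Mb j)⁻¹ * (Mb j)ᴴ) := by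
        rw [hQi, hQj]; simp only [Matrix.mul_assoc]
      rw [this, h, Matrix.mul_zero, Matrix.zero_mul]
  show Qi * Qj ≠ 0 ↔ G.Adj i j
  have hblk : (Mb i)ᴴ * Mb j ≠ 0 ↔ G.Adj i j := by
    rw [hblock i j, hpat i j]
    constructor
    · rintro (h | h)
      · exact absurd h hij
      · exact h
    · exact Or.inr
  constructor
  · intro h
    exact hblk.mp (fun h0 => h (hzero.mpr h0))
  · intro hadj h0
    exact (hblk.mpr hadj) (hzero.mp h0)

private lemma one_mat_ne_zero {s : ℕ} (hs : 0 < s) : (1 : Matrix (Fin s) (Fin s) ℂ) ≠ 0 := by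
  intro h
  have := congrFun (congrFun h ⟨0, hs⟩) ⟨0, hs⟩
  simp [Matrix.one_apply] at this

private lemma dirC {n : ℕ} (G : SimpleGraph (Fin n)) (t : Fin n → ℕ) (ht : ∀ i, 0 < t i)
    {k : ℕ} (P : Fin n → Matrix (Fin k) (Fin k) ℂ)
    (hherm : ∀ i, (P i)ᴴ = P i) (hidem : ∀ i, P i * P i = P i)
    (hrank : ∀ i, (P i).rank = t i)
    (hadj : ∀ i j, i ≠ j → (P i * P j ≠ 0 ↔ G.Adj i j)) :
    ∃ B : Matrix ((i : Fin n) × Fin (t i)) ((i : Fin n) × Fin (t i)) ℂ,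
      B.PosSemidef ∧
      (∀ i j : Fin n, (Matrix.of fun (a : Fin (t i)) (b : Fin (t j)) =>
          B ⟨i, a⟩ ⟨j, b⟩) ≠ 0 ↔ (i = j ∨ G.Adj i j)) ∧
      (∀ i : Fin n, (Matrix.of fun a b : Fin (t i) => B ⟨i, a⟩ ⟨i, b⟩) = 1) ∧
      B.rank ≤ k := by
  choose V hV1 hV2 using fun i => proj_fact (hherm i) (hidem i) (hrank i)
  set W : Matrix (Fin k) ((i : Fin n) × Fin (t i)) ℂ :=
    Matrix.of (fun x p => V p.1 x p.2) with hW
  refine ⟨Wᴴ * W, Matrix.posSemidef_conjTranspose_mul_self W, ?_, ?_, ?_⟩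
  · -- pattern
    have hPV : ∀ i, P i * V i = V i := by
      intro i
      rw [← hV2 i, Matrix.mul_assoc, hV1 i, Matrix.mul_one]
    have hVP : ∀ i, (V i)ᴴ * P i = (V i)ᴴ := by
      intro i
      rw [← hV2 i, ← Matrix.mul_assoc, hV1 i, Matrix.one_mul]
    have hblock : ∀ i j, (Matrix.of fun (a : Fin (t i)) (b : Fin (t j)) =>
        (Wᴴ * W) ⟨i, a⟩ ⟨j, b⟩) = (V i)ᴴ * V j := by
      intro i j
      ext a b
      simp [hW, Matrix.mul_apply, Matrix.conjTranspose_apply]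
    intro i j
    rw [hblock i j]
    rcases eq_or_ne i j with rfl | hij
    · simp only [eq_self_iff_true, true_or, iff_true]
      rw [hV1 i]
      exact one_mat_ne_zero (ht i)
    · rw [← hadj i j hij]
      have hz : (V i)ᴴ * V j = 0 ↔ P i * P j = 0 := by
        constructor
        · intro h
          have : P i * P j = V i * ((V i)ᴴ * V j) * (V j)ᴴ := by
            rw [← hV2 i, ← hV2 j]; simp only [Matrix.mul_assoc]
          rw [this, h, Matrix.mul_zero, Matrix.zero_mul]
        · intro h
          have : (V i)ᴴ * V j = ((V i)ᴴ * P i) * (P j * V j) := by rw [hVP, hPV]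
          rw [this] at *
          calc (V i)ᴴ * P i * (P j * V j) = (V i)ᴴ * (P i * P j) * V j := by
                simp only [Matrix.mul_assoc]
            _ = 0 := by rw [h, Matrix.mul_zero, Matrix.zero_mul]
      constructor
      · intro hne
        exact Or.inr (fun h0 => hne (hz.mpr h0))
      · rintro (h | h)
        · exact absurd h hij
        · exact fun h0 => h (hz.mp h0)
  · intro i
    ext a b
    have : (Matrix.of fun a b : Fin (t i) => (Wᴴ * W) ⟨i, a⟩ ⟨i, b⟩) a b = ((V i)ᴴ * V i) a b := by
      simp [hW, Matrix.mul_apply, Matrix.conjTranspose_apply]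
    rw [this, hV1 i]
  · rw [Matrix.rank_conjTranspose_mul_self]
    simpa using W.rank_le_card_height

private lemma nat_sInf_eq {S T : Set ℕ} (hTS : T ⊆ S) (h : ∀ k ∈ S, ∃ ρ ∈ T, ρ ≤ k) :
    sInf S = sInf T := by
  rcases Set.eq_empty_or_nonempty S with hS | hS
  · have hT : T = ∅ := Set.eq_empty_of_subset_empty (hS ▸ hTS)
    rw [hS, hT]
  · obtain ⟨ρ, hρT, hρle⟩ := h _ (Nat.sInf_mem hS)
    apply le_antisymm
    · exact Nat.sInf_le (hTS (Nat.sInf_mem ⟨ρ, hρT⟩))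
    · exact le_trans (Nat.sInf_le hρT) hρle

/-- `mpsd_t(G)`: the least `k` admitting orthogonal projections `Pᵢ ∈ M_k` of rank `tᵢ`
whose non-orthogonality graph is `G`. -/
noncomputable def mpsd {n : ℕ} (G : SimpleGraph (Fin n)) (t : Fin n → ℕ) : ℕ :=
  sInf {k : ℕ | ∃ P : Fin n → Matrix (Fin k) (Fin k) ℂ,
    (∀ i, (P i)ᴴ = P i) ∧ (∀ i, P i * P i = P i) ∧ (∀ i, (P i).rank = t i) ∧
    ∀ i j, i ≠ j → (P i * P j ≠ 0 ↔ G.Adj i j)}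

/-- `mpsd_t(G)` is the minimum rank of a PSD block matrix whose blocks are
supported exactly on the (non-strict) adjacency pattern of `G`, with full-rank
(resp. identity) diagonal blocks. -/
theorem mpsd_eq_minrank (n : ℕ) (G : SimpleGraph (Fin n)) (t : Fin n → ℕ)
    (ht : ∀ i, 0 < t i) :
    mpsd G t =
      sInf {ρ : ℕ | ∃ A : Matrix ((i : Fin n) × Fin (t i)) ((i : Fin n) × Fin (t i)) ℂ,
        A.PosSemidef ∧
        (∀ i j : Fin n, (Matrix.of fun (a : Fin (t i)) (b : Fin (t j)) =>
            A ⟨i, a⟩ ⟨j, b⟩) ≠ 0 ↔ (i = j ∨ G.Adj i j)) ∧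
        (∀ i : Fin n, (Matrix.of fun a b : Fin (t i) => A ⟨i, a⟩ ⟨i, b⟩).rank = t i) ∧
        A.rank = ρ} ∧
    mpsd G t =
      sInf {ρ : ℕ | ∃ B : Matrix ((i : Fin n) × Fin (t i)) ((i : Fin n) × Fin (t i)) ℂ,
        B.PosSemidef ∧
        (∀ i j : Fin n, (Matrix.of fun (a : Fin (t i)) (b : Fin (t j)) =>
            B ⟨i, a⟩ ⟨j, b⟩) ≠ 0 ↔ (i = j ∨ G.Adj i j)) ∧
        (∀ i : Fin n, (Matrix.of fun a b : Fin (t i) => B ⟨i, a⟩ ⟨i, b⟩) = 1) ∧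
        B.rank = ρ} := by
  set S1 : Set ℕ := {k : ℕ | ∃ P : Fin n → Matrix (Fin k) (Fin k) ℂ,
    (∀ i, (P i)ᴴ = P i) ∧ (∀ i, P i * P i = P i) ∧ (∀ i, (P i).rank = t i) ∧
    ∀ i j, i ≠ j → (P i * P j ≠ 0 ↔ G.Adj i j)} with hS1
  set S2 : Set ℕ := {ρ : ℕ | ∃ A : Matrix ((i : Fin n) × Fin (t i)) ((i : Fin n) × Fin (t i)) ℂ,
        A.PosSemidef ∧
        (∀ i j : Fin n, (Matrix.of fun (a : Fin (t i)) (b : Fin (t j)) =>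
            A ⟨i, a⟩ ⟨j, b⟩) ≠ 0 ↔ (i = j ∨ G.Adj i j)) ∧
        (∀ i : Fin n, (Matrix.of fun a b : Fin (t i) => A ⟨i, a⟩ ⟨i, b⟩).rank = t i) ∧
        A.rank = ρ} with hS2
  set S3 : Set ℕ := {ρ : ℕ | ∃ B : Matrix ((i : Fin n) × Fin (t i)) ((i : Fin n) × Fin (t i)) ℂ,
        B.PosSemidef ∧
        (∀ i j : Fin n, (Matrix.of fun (a : Fin (t i)) (b : Fin (t j)) =>
            B ⟨i, a⟩ ⟨j, b⟩) ≠ 0 ↔ (i = j ∨ G.Adj i j)) ∧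
        (∀ i : Fin n, (Matrix.of fun a b : Fin (t i) => B ⟨i, a⟩ ⟨i, b⟩) = 1) ∧
        B.rank = ρ} with hS3
  have hmpsd : mpsd G t = sInf S1 := rfl
  have h32 : S3 ⊆ S2 := by
    rintro ρ ⟨B, hpsd, hpat, hdiag, hrk⟩
    refine ⟨B, hpsd, hpat, fun i => ?_, hrk⟩
    rw [hdiag i, Matrix.rank_one, Fintype.card_fin]
  have h21 : S2 ⊆ S1 := by
    rintro ρ ⟨A, hpsd, hpat, hdiag, hrk⟩
    exact dirB G t A hpsd hpat hdiag hrk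
  have h13 : ∀ k ∈ S1, ∃ ρ ∈ S3, ρ ≤ k := by
    rintro k ⟨P, hherm, hidem, hrank, hadj⟩
    obtain ⟨B, hpsd, hpat, hdiag, hrk⟩ := dirC G t ht P hherm hidem hrank hadj
    exact ⟨B.rank, ⟨B, hpsd, hpat, hdiag, rfl⟩, hrk⟩
  constructor
  · rw [hmpsd]
    exact nat_sInf_eq h21 (fun k hk => by
      obtain ⟨ρ, hρ, hle⟩ := h13 k hk
      exact ⟨ρ, h32 hρ, hle⟩)
  · rw [hmpsd]
    exact nat_sInf_eq (fun ρ hρ => h21 (h32 hρ)) h13
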